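/- Let A₀ be a self-adjoint operator on H with A₀ ≥ κ₀ > 0, let cⱼ ≥ 0 with C := Σⱼ cⱼ < ∞ and γⱼ > 0. For φ₀ ∈ Dom(A₀²), φ₁ ∈ Dom(A₀) and t ≥ 0, the series Σⱼ cⱼ A₀²(A₀² + γⱼ²I)⁻¹[ −A₀( A₀(e^{−γⱼ t}I − cos(A₀t)) + γⱼ sin(A₀t) )φ₀ + ( γⱼ(cos(A₀t) − e^{−γⱼ t}I) + A₀ sin(A₀t) )φ₁ ] converges absolutely in H and its norm is bounded by a constant (depending only on C) times (‖A₀²φ₀‖ + ‖A₀φ₁‖). -/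

import Mathlib

set_option maxHeartbeats 1600000


/-- `cos(tA)` for an operator `A`, via `cos θ = (e^{iθ} + e^{-iθ})/2`. -/
noncomputable def opCos {H : Type*} [NormedAddCommGroup H] [InnerProductSpace ℂ H]
    [CompleteSpace H] (A : H →L[ℂ] H) (t : ℝ) : H →L[ℂ] H :=
  (2 : ℂ)⁻¹ • (NormedSpace.exp ((t : ℂ) • Complex.I • A) +
    NormedSpace.exp (-((t : ℂ) • Complex.I • A)))

/-- `sin(tA)` for an operator `A`, via `sin θ = (e^{iθ} − e^{-iθ})/(2i)`. -/
noncomputable def opSin {H : Type*} [NormedAddCommGroup H] [InnerProductSpace ℂ H]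
    [CompleteSpace H] (A : H →L[ℂ] H) (t : ℝ) : H →L[ℂ] H :=
  (2 * Complex.I)⁻¹ • (NormedSpace.exp ((t : ℂ) • Complex.I • A) -
    NormedSpace.exp (-((t : ℂ) • Complex.I • A)))


section Aux

variable {H : Type*} [NormedAddCommGroup H] [InnerProductSpace ℂ H] [CompleteSpace H]

lemma aux_unitary_norm_le {u : H →L[ℂ] H} (hu : u ∈ unitary (H →L[ℂ] H)) : ‖u‖ ≤ 1 := by
  have h1 : star u * u = 1 := hu.1
  have h2 : ‖star u * u‖ = ‖u‖ * ‖u‖ := CStarRing.norm_star_mul_self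
  have h3 : ‖u‖ * ‖u‖ ≤ 1 := by
    rw [← h2, h1]
    simpa [ContinuousLinearMap.one_def] using ContinuousLinearMap.norm_id_le (E := H)
  nlinarith [norm_nonneg u]

lemma aux_exp_norm_le (A : H →L[ℂ] H) (hsa : IsSelfAdjoint A) (t : ℝ) :
    ‖NormedSpace.exp ((t : ℂ) • Complex.I • A)‖ ≤ 1 := by
  have h1 : (t : ℂ) • Complex.I • A = Complex.I • (t • A) := by
    rw [smul_comm]
    congr 1
  have hta : IsSelfAdjoint (t • A) := by
    rw [IsSelfAdjoint, star_smul, star_trivial, hsa.star_eq]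
  have hskew : Complex.I • (t • A) ∈ skewAdjoint (H →L[ℂ] H) :=
    hta.smul_mem_skewAdjoint Complex.conj_I
  rw [h1]
  let +nondep : NormedAlgebra ℚ (H →L[ℂ] H) := .restrictScalars ℚ ℂ (H →L[ℂ] H)
  exact aux_unitary_norm_le (NormedSpace.exp_mem_unitary_of_mem_skewAdjoint hskew)

lemma aux_exp_neg_norm_le (A : H →L[ℂ] H) (hsa : IsSelfAdjoint A) (t : ℝ) :
    ‖NormedSpace.exp (-((t : ℂ) • Complex.I • A))‖ ≤ 1 := by
  have h : -((t : ℂ) • Complex.I • A) = ((-t : ℝ) : ℂ) • Complex.I • A := by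
    push_cast
    rw [neg_smul]
  rw [h]
  exact aux_exp_norm_le A hsa (-t)

lemma aux_opCos_norm_le (A : H →L[ℂ] H) (hsa : IsSelfAdjoint A) (t : ℝ) :
    ‖opCos A t‖ ≤ 1 := by
  have h1 := aux_exp_norm_le A hsa t
  have h2 := aux_exp_neg_norm_le A hsa t
  rw [opCos, norm_smul]
  have h : ‖(2 : ℂ)⁻¹‖ = 2⁻¹ := by simp
  rw [h]
  calc 2⁻¹ * ‖_ + _‖ ≤ 2⁻¹ * (‖_‖ + ‖_‖) := by
        gcongr; exact norm_add_le _ _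
    _ ≤ 2⁻¹ * (1 + 1) := by gcongr
    _ = 1 := by norm_num

lemma aux_opSin_norm_le (A : H →L[ℂ] H) (hsa : IsSelfAdjoint A) (t : ℝ) :
    ‖opSin A t‖ ≤ 1 := by
  have h1 := aux_exp_norm_le A hsa t
  have h2 := aux_exp_neg_norm_le A hsa t
  rw [opSin, norm_smul]
  have h : ‖(2 * Complex.I)⁻¹‖ = 2⁻¹ := by simp
  rw [h]
  calc 2⁻¹ * ‖_ - _‖ ≤ 2⁻¹ * (‖_‖ + ‖_‖) := by
        gcongr; exact norm_sub_le _ _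
    _ ≤ 2⁻¹ * (1 + 1) := by gcongr
    _ = 1 := by norm_num

lemma aux_res_bounds (A : H →L[ℂ] H) (hsa : IsSelfAdjoint A) (γ : ℝ) (y : H) :
    ‖(A ^ 2) y‖ ≤ ‖(A ^ 2 + γ ^ 2 • (1 : H →L[ℂ] H)) y‖ ∧
    2 * γ * ‖A y‖ ≤ ‖(A ^ 2 + γ ^ 2 • (1 : H →L[ℂ] H)) y‖ := by
  have hsym := hsa.isSymmetric
  set B : H →L[ℂ] H := A ^ 2 + γ ^ 2 • (1 : H →L[ℂ] H) with hB
  have happ : B y = (A ^ 2) y + (γ ^ 2 : ℝ) • y := by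
    simp [hB, ContinuousLinearMap.add_apply]
  have hA2 : (A ^ 2) y = A (A y) := by
    simp [sq, ContinuousLinearMap.mul_apply]
  have hre : RCLike.re (inner ℂ ((A ^ 2) y) y) = ‖A y‖ ^ 2 := by
    rw [hA2]
    have h := hsym (A y) y
    simp only [ContinuousLinearMap.coe_coe] at h
    rw [h, inner_self_eq_norm_sq]
  have hsm : ‖(γ ^ 2 : ℝ) • y‖ = γ ^ 2 * ‖y‖ := by
    rw [norm_smul]; simp [abs_of_nonneg (sq_nonneg γ)]
  have hexp : ‖B y‖ ^ 2 = ‖(A ^ 2) y‖ ^ 2 + 2 * (γ ^ 2 * ‖A y‖ ^ 2) + (γ ^ 2 * ‖y‖) ^ 2 := by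
    rw [happ, @norm_add_sq ℂ, hsm]
    congr 2
    rw [RCLike.real_smul_eq_coe_smul (K := ℂ), inner_smul_right, RCLike.re_ofReal_mul, hre]
  constructor
  · nlinarith [norm_nonneg ((A ^ 2) y), norm_nonneg (B y), sq_nonneg (γ * ‖A y‖),
      sq_nonneg (γ ^ 2 * ‖y‖)]
  · have hip : RCLike.re (inner ℂ (B y) y) = ‖A y‖ ^ 2 + γ ^ 2 * ‖y‖ ^ 2 := by
      rw [happ, inner_add_left, map_add, hre, RCLike.real_smul_eq_coe_smul (K := ℂ),
        inner_smul_left, RCLike.conj_ofReal, RCLike.re_ofReal_mul, inner_self_eq_norm_sq]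
    have hle : ‖A y‖ ^ 2 + γ ^ 2 * ‖y‖ ^ 2 ≤ ‖B y‖ * ‖y‖ := by
      rw [← hip]; exact re_inner_le_norm _ _
    rcases eq_or_ne y 0 with h0 | h0
    · simp [h0]
    · have hy : 0 < ‖y‖ := norm_pos_iff.mpr h0
      rw [← mul_le_mul_iff_left₀ hy]
      nlinarith [sq_nonneg (‖A y‖ - γ * ‖y‖)]

lemma aux_op_id1 (A R' S D : H →L[ℂ] H) (γ : ℝ)
    (hR : Commute A R') (hS : Commute A S) (hD : Commute A D) :
    (A ^ 2 * R') * (-(A * (A * D + γ • S))) =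
      -((A ^ 2 * R') * (D * A ^ 2)) - γ • ((A * R') * (S * A ^ 2)) := by
  have hR1 : R' * A = A * R' := hR.symm.eq
  have hS1 : S * A = A * S := hS.symm.eq
  have hD1 : D * A = A * D := hD.symm.eq
  have hR2 : ∀ x : H →L[ℂ] H, R' * (A * x) = A * (R' * x) := fun x => by
    rw [← mul_assoc, hR1, mul_assoc]
  have hS2 : ∀ x : H →L[ℂ] H, S * (A * x) = A * (S * x) := fun x => by
    rw [← mul_assoc, hS1, mul_assoc]
  have hD2 : ∀ x : H →L[ℂ] H, D * (A * x) = A * (D * x) := fun x => by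
    rw [← mul_assoc, hD1, mul_assoc]
  simp only [pow_two, mul_add, mul_neg, neg_mul, mul_smul_comm, smul_mul_assoc, mul_assoc,
    hR1, hS1, hD1, hR2, hS2, hD2, mul_sub, neg_add, ← sub_eq_add_neg]

lemma aux_op_id2 (A R' S D' : H →L[ℂ] H) (γ : ℝ)
    (hR : Commute A R') (hS : Commute A S) (hD : Commute A D') :
    (A ^ 2 * R') * (γ • D' + A * S) =
      γ • ((A * R') * (D' * A)) + (A ^ 2 * R') * (S * A) := by
  have hR1 : R' * A = A * R' := hR.symm.eq
  have hS1 : S * A = A * S := hS.symm.eq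
  have hD1 : D' * A = A * D' := hD.symm.eq
  have hR2 : ∀ x : H →L[ℂ] H, R' * (A * x) = A * (R' * x) := fun x => by
    rw [← mul_assoc, hR1, mul_assoc]
  have hS2 : ∀ x : H →L[ℂ] H, S * (A * x) = A * (S * x) := fun x => by
    rw [← mul_assoc, hS1, mul_assoc]
  have hD2 : ∀ x : H →L[ℂ] H, D' * (A * x) = A * (D' * x) := fun x => by
    rw [← mul_assoc, hD1, mul_assoc]
  simp only [pow_two, mul_add, mul_smul_comm, smul_mul_assoc, mul_assoc,
    hR1, hS1, hD1, hR2, hS2, hD2]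

end Aux

/-- Estimate (eq:mest): the series
`Σⱼ cⱼ A₀²(A₀² + γⱼ²I)⁻¹[ −A₀(A₀(e^{−γⱼt}I − cos(A₀t)) + γⱼ sin(A₀t))φ₀
  + (γⱼ(cos(A₀t) − e^{−γⱼt}I) + A₀ sin(A₀t))φ₁ ]`
converges absolutely, with norm bounded by a constant (depending only on `C = Σ cⱼ`) times
`‖A₀²φ₀‖ + ‖A₀φ₁‖`, uniformly in `t ≥ 0`. -/
theorem stmt14 {H : Type*} [NormedAddCommGroup H] [InnerProductSpace ℂ H] [CompleteSpace H]
    (A₀ : H →L[ℂ] H) (hsa : IsSelfAdjoint A₀) (κ₀ : ℝ) (hκ₀ : 0 < κ₀)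
    (hAbd : ∀ x : H, κ₀ * ‖x‖ ≤ ‖A₀ x‖)
    (c γs : ℕ → ℝ) (hc : ∀ j, 0 ≤ c j) (hsum : Summable c) (C : ℝ) (hC : C = ∑' j, c j)
    (hγs : ∀ j, 0 < γs j)
    (R : ℕ → (H →L[ℂ] H))
    (hR₁ : ∀ j, (A₀ ^ 2 + γs j ^ 2 • (1 : H →L[ℂ] H)) * R j = 1)
    (hR₂ : ∀ j, R j * (A₀ ^ 2 + γs j ^ 2 • (1 : H →L[ℂ] H)) = 1) :
    ∃ d : ℝ, 0 < d ∧ ∀ t : ℝ, 0 ≤ t → ∀ φ₀ φ₁ : H,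
      (Summable fun j =>
        ‖c j • ((A₀ ^ 2 * R j)
          ((-(A₀ * (A₀ * (Real.exp (-(γs j) * t) • (1 : H →L[ℂ] H) - opCos A₀ t)
              + γs j • opSin A₀ t))) φ₀
           + (γs j • (opCos A₀ t - Real.exp (-(γs j) * t) • (1 : H →L[ℂ] H))
              + A₀ * opSin A₀ t) φ₁))‖) ∧
      ‖∑' j, c j • ((A₀ ^ 2 * R j)
          ((-(A₀ * (A₀ * (Real.exp (-(γs j) * t) • (1 : H →L[ℂ] H) - opCos A₀ t)
              + γs j • opSin A₀ t))) φ₀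
           + (γs j • (opCos A₀ t - Real.exp (-(γs j) * t) • (1 : H →L[ℂ] H))
              + A₀ * opSin A₀ t) φ₁))‖
        ≤ d * (‖(A₀ ^ 2) φ₀‖ + ‖A₀ φ₁‖) := by
  have hCnn : 0 ≤ C := hC ▸ tsum_nonneg hc
  refine ⟨3 * C + 1, by linarith, ?_⟩
  intro t ht φ₀ φ₁
  set E : H →L[ℂ] H := opCos A₀ t with hEdef
  set S : H →L[ℂ] H := opSin A₀ t with hSdef
  have hEn : ‖E‖ ≤ 1 := aux_opCos_norm_le A₀ hsa t
  have hSn : ‖S‖ ≤ 1 := aux_opSin_norm_le A₀ hsa t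
  -- commutation with A₀
  have hx : Commute A₀ ((t : ℂ) • Complex.I • A₀) :=
    ((Commute.refl A₀).smul_right Complex.I).smul_right (t : ℂ)
  have hexp1 : Commute A₀ (NormedSpace.exp ((t : ℂ) • Complex.I • A₀)) := hx.exp_right
  have hexp2 : Commute A₀ (NormedSpace.exp (-((t : ℂ) • Complex.I • A₀))) :=
    hx.neg_right.exp_right
  have hAE : Commute A₀ E := (hexp1.add_right hexp2).smul_right _
  have hAS : Commute A₀ S := (hexp1.sub_right hexp2).smul_right _
  set N₀ : ℝ := ‖(A₀ ^ 2) φ₀‖ with hN₀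
  set N₁ : ℝ := ‖A₀ φ₁‖ with hN₁
  have hN₀n : 0 ≤ N₀ := norm_nonneg _
  have hN₁n : 0 ≤ N₁ := norm_nonneg _
  have hSb : ∀ x : H, ‖S x‖ ≤ ‖x‖ := fun x => by
    calc ‖S x‖ ≤ ‖S‖ * ‖x‖ := S.le_opNorm x
      _ ≤ 1 * ‖x‖ := by gcongr
      _ = ‖x‖ := one_mul _
  have hEb : ∀ x : H, ‖E x‖ ≤ ‖x‖ := fun x => by
    calc ‖E x‖ ≤ ‖E‖ * ‖x‖ := E.le_opNorm x
      _ ≤ 1 * ‖x‖ := by gcongr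
      _ = ‖x‖ := one_mul _
  have key : ∀ j, ‖c j • ((A₀ ^ 2 * R j)
          ((-(A₀ * (A₀ * (Real.exp (-(γs j) * t) • (1 : H →L[ℂ] H) - E)
              + γs j • S))) φ₀
           + (γs j • (E - Real.exp (-(γs j) * t) • (1 : H →L[ℂ] H))
              + A₀ * S) φ₁))‖ ≤ c j * (3 * (N₀ + N₁)) := by
    intro j
    set γ : ℝ := γs j with hγdef
    have hγ : 0 < γ := hγs j
    set e : ℝ := Real.exp (-γ * t) with hedef
    have he0 : 0 < e := Real.exp_pos _
    have he1 : e ≤ 1 := by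
      rw [hedef, Real.exp_le_one_iff]
      nlinarith
    set D : H →L[ℂ] H := e • (1 : H →L[ℂ] H) - E with hDdef
    set D' : H →L[ℂ] H := E - e • (1 : H →L[ℂ] H) with hD'def
    have hAD : Commute A₀ D := ((Commute.one_right A₀).smul_right e).sub_right hAE
    have hAD' : Commute A₀ D' := hAE.sub_right ((Commute.one_right A₀).smul_right e)
    -- commute with R j
    have hBA : Commute (A₀ ^ 2 + γ ^ 2 • (1 : H →L[ℂ] H)) A₀ :=
      ((Commute.refl A₀).pow_left 2).add_left (((Commute.one_left A₀).smul_left _))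
    have hAR : Commute A₀ (R j) := by
      show A₀ * R j = R j * A₀
      calc A₀ * R j = (R j * (A₀ ^ 2 + γ ^ 2 • (1 : H →L[ℂ] H))) * (A₀ * R j) := by
            rw [hR₂ j, one_mul]
        _ = R j * (((A₀ ^ 2 + γ ^ 2 • (1 : H →L[ℂ] H)) * A₀) * R j) := by
            rw [mul_assoc, mul_assoc]
        _ = R j * ((A₀ * (A₀ ^ 2 + γ ^ 2 • (1 : H →L[ℂ] H))) * R j) := by
            rw [hBA.eq]
        _ = (R j * A₀) * ((A₀ ^ 2 + γ ^ 2 • (1 : H →L[ℂ] H)) * R j) := by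
            rw [mul_assoc, ← mul_assoc, ← mul_assoc]
        _ = R j * A₀ := by rw [hR₁ j, mul_one]
    -- pointwise resolvent bounds
    have hPapp : ∀ x : H, ‖(A₀ ^ 2 * R j) x‖ ≤ ‖x‖ := by
      intro x
      have h1 : (A₀ ^ 2 + γ ^ 2 • (1 : H →L[ℂ] H)) (R j x) = x := by
        have h := congrArg (fun T : H →L[ℂ] H => T x) (hR₁ j)
        simpa [ContinuousLinearMap.mul_apply] using h
      have h2 := (aux_res_bounds A₀ hsa γ (R j x)).1
      rw [h1] at h2
      simpa [ContinuousLinearMap.mul_apply] using h2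
    have hQapp : ∀ x : H, γ * ‖(A₀ * R j) x‖ ≤ (1 / 2) * ‖x‖ := by
      intro x
      have h1 : (A₀ ^ 2 + γ ^ 2 • (1 : H →L[ℂ] H)) (R j x) = x := by
        have h := congrArg (fun T : H →L[ℂ] H => T x) (hR₁ j)
        simpa [ContinuousLinearMap.mul_apply] using h
      have h2 := (aux_res_bounds A₀ hsa γ (R j x)).2
      rw [h1] at h2
      have h3 : (A₀ * R j) x = A₀ (R j x) := by
        simp [ContinuousLinearMap.mul_apply]
      rw [h3]
      linarith
    -- bounds on D, D'
    have hDb : ∀ x : H, ‖D x‖ ≤ 2 * ‖x‖ := by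
      intro x
      have h : D x = e • x - E x := by
        simp [hDdef, ContinuousLinearMap.sub_apply]
      rw [h]
      calc ‖e • x - E x‖ ≤ ‖e • x‖ + ‖E x‖ := norm_sub_le _ _
        _ ≤ e * ‖x‖ + ‖x‖ := by
            rw [norm_smul, Real.norm_eq_abs, abs_of_pos he0]
            gcongr
            exact hEb x
        _ ≤ 1 * ‖x‖ + ‖x‖ := by gcongr
        _ = 2 * ‖x‖ := by ring
    have hD'b : ∀ x : H, ‖D' x‖ ≤ 2 * ‖x‖ := by
      intro x
      have h : D' x = -(D x) := by
        simp [hDdef, hD'def, ContinuousLinearMap.sub_apply]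
      rw [h, norm_neg]
      exact hDb x
    -- vector decomposition
    have hv : (A₀ ^ 2 * R j)
          ((-(A₀ * (A₀ * (e • (1 : H →L[ℂ] H) - E) + γ • S))) φ₀
           + (γ • (E - e • (1 : H →L[ℂ] H)) + A₀ * S) φ₁)
        = (-((A₀ ^ 2 * R j) (D ((A₀ ^ 2) φ₀))) - γ • ((A₀ * R j) (S ((A₀ ^ 2) φ₀))))
          + (γ • ((A₀ * R j) (D' (A₀ φ₁))) + (A₀ ^ 2 * R j) (S (A₀ φ₁))) := by
      rw [map_add]
      rw [show (A₀ ^ 2 * R j) ((-(A₀ * (A₀ * (e • (1 : H →L[ℂ] H) - E) + γ • S))) φ₀)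
            = ((A₀ ^ 2 * R j) * (-(A₀ * (A₀ * D + γ • S)))) φ₀ by
          rw [hDdef]; rfl]
      rw [show (A₀ ^ 2 * R j) ((γ • (E - e • (1 : H →L[ℂ] H)) + A₀ * S) φ₁)
            = ((A₀ ^ 2 * R j) * (γ • D' + A₀ * S)) φ₁ by
          rw [hD'def]; rfl]
      rw [aux_op_id1 A₀ (R j) S D γ hAR hAS hAD, aux_op_id2 A₀ (R j) S D' γ hAR hAS hAD']
      simp [ContinuousLinearMap.sub_apply, ContinuousLinearMap.add_apply,
        ContinuousLinearMap.smul_apply, ContinuousLinearMap.mul_apply]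
    -- norm bound
    have b1 : ‖(A₀ ^ 2 * R j) (D ((A₀ ^ 2) φ₀))‖ ≤ 2 * N₀ :=
      le_trans (hPapp _) (hDb _)
    have b2 : ‖γ • ((A₀ * R j) (S ((A₀ ^ 2) φ₀)))‖ ≤ (1 / 2) * N₀ := by
      rw [norm_smul, Real.norm_eq_abs, abs_of_pos hγ]
      calc γ * ‖(A₀ * R j) (S ((A₀ ^ 2) φ₀))‖ ≤ (1 / 2) * ‖S ((A₀ ^ 2) φ₀)‖ := hQapp _
        _ ≤ (1 / 2) * N₀ := by
            have := hSb ((A₀ ^ 2) φ₀)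
            rw [hN₀]; linarith
    have b3 : ‖γ • ((A₀ * R j) (D' (A₀ φ₁)))‖ ≤ N₁ := by
      rw [norm_smul, Real.norm_eq_abs, abs_of_pos hγ]
      calc γ * ‖(A₀ * R j) (D' (A₀ φ₁))‖ ≤ (1 / 2) * ‖D' (A₀ φ₁)‖ := hQapp _
        _ ≤ (1 / 2) * (2 * N₁) := by
            have := hD'b (A₀ φ₁)
            rw [hN₁]; linarith
        _ = N₁ := by ring
    have b4 : ‖(A₀ ^ 2 * R j) (S (A₀ φ₁))‖ ≤ N₁ :=
      le_trans (hPapp _) (hSb _)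
    rw [norm_smul, Real.norm_eq_abs, abs_of_nonneg (hc j), hv]
    have hvb : ‖(-((A₀ ^ 2 * R j) (D ((A₀ ^ 2) φ₀))) - γ • ((A₀ * R j) (S ((A₀ ^ 2) φ₀))))
          + (γ • ((A₀ * R j) (D' (A₀ φ₁))) + (A₀ ^ 2 * R j) (S (A₀ φ₁)))‖
        ≤ 3 * (N₀ + N₁) := by
      calc ‖_ + _‖ ≤ ‖-((A₀ ^ 2 * R j) (D ((A₀ ^ 2) φ₀))) - γ • ((A₀ * R j) (S ((A₀ ^ 2) φ₀)))‖
              + ‖γ • ((A₀ * R j) (D' (A₀ φ₁))) + (A₀ ^ 2 * R j) (S (A₀ φ₁))‖ :=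
            norm_add_le _ _
        _ ≤ (‖(A₀ ^ 2 * R j) (D ((A₀ ^ 2) φ₀))‖ + ‖γ • ((A₀ * R j) (S ((A₀ ^ 2) φ₀)))‖)
              + (‖γ • ((A₀ * R j) (D' (A₀ φ₁)))‖ + ‖(A₀ ^ 2 * R j) (S (A₀ φ₁))‖) := by
            gcongr
            · exact le_trans (norm_sub_le _ _) (by rw [norm_neg])
            · exact norm_add_le _ _
        _ ≤ (2 * N₀ + (1 / 2) * N₀) + (N₁ + N₁) := by gcongr
        _ ≤ 3 * (N₀ + N₁) := by linarith
    exact mul_le_mul_of_nonneg_left hvb (hc j)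
  -- conclusion
  have hgs : Summable (fun j => c j * (3 * (N₀ + N₁))) := hsum.mul_right _
  have hs : Summable fun j =>
      ‖c j • ((A₀ ^ 2 * R j)
          ((-(A₀ * (A₀ * (Real.exp (-(γs j) * t) • (1 : H →L[ℂ] H) - E)
              + γs j • S))) φ₀
           + (γs j • (E - Real.exp (-(γs j) * t) • (1 : H →L[ℂ] H))
              + A₀ * S) φ₁))‖ :=
    Summable.of_nonneg_of_le (fun j => norm_nonneg _) key hgs
  refine ⟨hs, ?_⟩
  calc ‖∑' j, c j • ((A₀ ^ 2 * R j)
          ((-(A₀ * (A₀ * (Real.exp (-(γs j) * t) • (1 : H →L[ℂ] H) - E)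
              + γs j • S))) φ₀
           + (γs j • (E - Real.exp (-(γs j) * t) • (1 : H →L[ℂ] H))
              + A₀ * S) φ₁))‖
      ≤ ∑' j, ‖c j • ((A₀ ^ 2 * R j)
          ((-(A₀ * (A₀ * (Real.exp (-(γs j) * t) • (1 : H →L[ℂ] H) - E)
              + γs j • S))) φ₀
           + (γs j • (E - Real.exp (-(γs j) * t) • (1 : H →L[ℂ] H))
              + A₀ * S) φ₁))‖ := norm_tsum_le_tsum_norm hs
    _ ≤ ∑' j, c j * (3 * (N₀ + N₁)) := Summable.tsum_le_tsum key hs hgs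
    _ = C * (3 * (N₀ + N₁)) := by rw [tsum_mul_right, ← hC]
    _ ≤ (3 * C + 1) * (N₀ + N₁) := by nlinarith
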